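/- Let n ≥ 1, δ ∈ (0, 1), V > 0. Let Σ be an n×n real positive definite matrix and, for each t ∈ {1, …, n}, let Σ'_t be an n×n real positive definite matrix. Let C₀ be a real number with C₀ ≥ 1/λ_min(Σ) + 1/λ_min(Σ'_t) for all t. Let X be a random vector in ℝⁿ with E[X] = 0, covariance matrix Σ, and almost surely X_i ∈ [−V, V] for all i. For each t let Z_t = XᵀΣ^{-1}X − Xᵀ(Σ'_t)^{-1}X + ln(det Σ / det Σ'_t), and let 2𝔏 = max_{t ∈ {1,…,n}} Z_t. Then P( 2𝔏 ≥ max_t ( n − Tr(Σ (Σ'_t)^{-1}) + ln(det Σ / det Σ'_t) ) + C₀ V² n √(0.5 · ln(2n/δ)) ) ≤ δ/2. -/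

import Mathlib

open Matrix MeasureTheory

/-- The smallest eigenvalue of a real symmetric matrix, as the infimum of its spectrum. -/
noncomputable def lamMin {n : ℕ} (M : Matrix (Fin n) (Fin n) ℝ) : ℝ := sInf (spectrum ℝ M)

section AuxLemmas
open Real


lemma keyA1 {x : ℝ} (hx : 0 ≤ x) : (2 - x) * exp x ≤ 2 + x := by
  have h : ∀ y : ℝ, HasDerivAt (fun z : ℝ => 2 + z - (2 - z) * exp z) (1 - (1 - y) * exp y) y := by
    intro y
    have h1 : HasDerivAt (fun z : ℝ => (2 - z) * exp z) ((-1) * exp y + (2 - y) * exp y) y :=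
      (((hasDerivAt_id y).const_sub 2)).mul (Real.hasDerivAt_exp y)
    have h2 : HasDerivAt (fun z : ℝ => 2 + z - (2 - z) * exp z)
        (1 - ((-1) * exp y + (2 - y) * exp y)) y :=
      (((hasDerivAt_id y).const_add 2)).sub h1
    convert h2 using 1; ring
  have hmono : MonotoneOn (fun z : ℝ => 2 + z - (2 - z) * exp z) (Set.Ici 0) := by
    apply monotoneOn_of_deriv_nonneg (convex_Ici 0)
    · exact (Continuous.sub (by continuity) (by continuity)).continuousOn
    · intro y _
      exact (h y).differentiableAt.differentiableWithinAt
    · intro y hy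
      rw [(h y).deriv]
      have h1 : (1 - y) * exp y ≤ 1 := by
        have h2 := Real.add_one_le_exp (-y)
        have h3 := mul_le_mul_of_nonneg_right h2 (Real.exp_pos y).le
        rw [← Real.exp_add, neg_add_cancel, Real.exp_zero] at h3; linarith [h3]
      nlinarith [h1]
  have h0 := hmono (Set.self_mem_Ici) (Set.mem_Ici.2 hx) hx
  simp at h0
  nlinarith

lemma keyD_pos {p : ℝ} (hp : 0 ≤ p) (hp1 : p ≤ 1) (u : ℝ) : 0 < 1 - p + p * exp u := by
  rcases eq_or_lt_of_le hp1 with h | h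
  · subst h; simpa using Real.exp_pos u
  · have := mul_nonneg hp (Real.exp_pos u).le
    linarith

lemma keyA2 {p u : ℝ} (hp : 0 ≤ p) (hp1 : p ≤ 1) (hu : 0 ≤ u) :
    p * (1 - p) * (exp u - 1) ≤ u / 4 * (1 - p + p * exp u) := by
  set r := exp (u / 2) with hrdef
  have hr : 1 ≤ r := Real.one_le_exp (by linarith)
  have hrsq : exp u = r ^ 2 := by
    rw [hrdef, sq, ← Real.exp_add]; norm_num
  have h1 : p * (1 - p) * (r + 1) ^ 2 ≤ 1 - p + p * r ^ 2 := by
    nlinarith [sq_nonneg (1 - p * (1 + r))]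
  have h2 : 4 * (r - 1) ≤ u * (r + 1) := by
    have := keyA1 (x := u / 2) (by linarith)
    rw [← hrdef] at this
    nlinarith
  have hA : 0 ≤ p * (1 - p) * (r + 1) := by
    have := mul_nonneg (mul_nonneg hp (by linarith : (0:ℝ) ≤ 1 - p)) (by linarith : (0:ℝ) ≤ r + 1)
    linarith
  rw [hrsq]
  nlinarith [mul_le_mul_of_nonneg_right h2 hA, mul_le_mul_of_nonneg_left h1 hu]

lemma keyA3pos {p u : ℝ} (hp : 0 ≤ p) (hp1 : p ≤ 1) (hu : 0 ≤ u) :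
    -(p * u) + Real.log (1 - p + p * exp u) ≤ u ^ 2 / 8 := by
  have hD : ∀ y : ℝ, 0 < 1 - p + p * exp y := keyD_pos hp hp1
  have hder : ∀ y : ℝ, HasDerivAt (fun z : ℝ => z ^ 2 / 8 + p * z - Real.log (1 - p + p * exp z))
      (y / 4 + p - p * exp y / (1 - p + p * exp y)) y := by
    intro y
    have h1 : HasDerivAt (fun z : ℝ => 1 - p + p * exp z) (p * exp y) y := by
      simpa using (((Real.hasDerivAt_exp y).const_mul p).const_add (1 - p))
    have h2 : HasDerivAt (fun z : ℝ => Real.log (1 - p + p * exp z))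
        (p * exp y / (1 - p + p * exp y)) y := h1.log (hD y).ne'
    have h3 : HasDerivAt (fun z : ℝ => z ^ 2 / 8 + p * z)
        (y / 4 + p) y := by
      have : HasDerivAt (fun z : ℝ => z ^ 2 / 8 + p * z) ((2:ℕ) * y ^ (2 - 1) / 8 + p * 1) y :=
        ((hasDerivAt_pow 2 y).div_const 8).add ((hasDerivAt_id y).const_mul p)
      convert this using 1; ring
    exact h3.sub h2
  have hmono : MonotoneOn (fun z : ℝ => z ^ 2 / 8 + p * z - Real.log (1 - p + p * exp z))
      (Set.Ici 0) := by
    apply monotoneOn_of_deriv_nonneg (convex_Ici 0)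
    · exact ContinuousOn.sub (by fun_prop) (ContinuousOn.log (by fun_prop)
        (fun y _ => (hD y).ne'))
    · intro y _; exact (hder y).differentiableAt.differentiableWithinAt
    · intro y hy
      have hy0 : 0 ≤ y := le_of_lt (by simpa using hy)
      rw [(hder y).deriv]
      have hkey := keyA2 hp hp1 hy0
      have : p * exp y / (1 - p + p * exp y) ≤ y / 4 + p := by
        rw [div_le_iff₀ (hD y)]
        nlinarith
      linarith
  have h0 := hmono Set.self_mem_Ici (Set.mem_Ici.2 hu) hu
  simp at h0
  linarith

lemma keyA3 {p : ℝ} (u : ℝ) (hp : 0 ≤ p) (hp1 : p ≤ 1) :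
    -(p * u) + Real.log (1 - p + p * exp u) ≤ u ^ 2 / 8 := by
  rcases le_or_gt 0 u with hu | hu
  · exact keyA3pos hp hp1 hu
  · have harg : 1 - p + p * exp u = exp u * (1 - (1 - p) + (1 - p) * exp (-u)) := by
      rw [Real.exp_neg]
      field_simp
      ring
    have hD2 : 0 < 1 - (1 - p) + (1 - p) * exp (-u) :=
      keyD_pos (by linarith) (by linarith) (-u)
    have := keyA3pos (p := 1 - p) (u := -u) (by linarith) (by linarith) (by linarith)
    rw [harg, Real.log_mul (Real.exp_ne_zero u) hD2.ne', Real.log_exp]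
    nlinarith [this]

open MeasureTheory ProbabilityTheory in
lemma hoeffding_mgf {Ω : Type*} [MeasurableSpace Ω] (P : Measure Ω) [IsProbabilityMeasure P]
    {Y : Ω → ℝ} (hY : Measurable Y) {a b : ℝ} (hab : a < b)
    (hbd : ∀ᵐ ω ∂P, Y ω ∈ Set.Icc a b) (t : ℝ) :
    mgf Y P t ≤ exp (t * (∫ ω, Y ω ∂P) + t ^ 2 * (b - a) ^ 2 / 8) := by
  have hba : (0:ℝ) < b - a := by linarith
  have hYint : Integrable Y P := by
    refine Integrable.mono' (integrable_const (max |a| |b|)) hY.aestronglyMeasurable ?_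
    exact hbd.mono fun ω h => by
      rw [Real.norm_eq_abs]; exact abs_le_max_abs_abs h.1 h.2
  set μ := ∫ ω, Y ω ∂P with hμdef
  have hμa : a ≤ μ := by
    have := integral_mono_ae (integrable_const a) hYint (hbd.mono fun ω h => h.1)
    simpa using this
  have hμb : μ ≤ b := by
    have := integral_mono_ae hYint (integrable_const b) (hbd.mono fun ω h => h.2)
    simpa using this
  have hexpint : Integrable (fun ω => exp (t * Y ω)) P := by
    refine Integrable.mono' (integrable_const (exp (max (t * a) (t * b))))
      (hY.const_mul t).exp.aestronglyMeasurable ?_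
    refine hbd.mono fun ω h => ?_
    rw [Real.norm_eq_abs, abs_of_pos (Real.exp_pos _), Real.exp_le_exp]
    rcases le_or_gt 0 t with ht | ht
    · exact le_max_of_le_right (mul_le_mul_of_nonneg_left h.2 ht)
    · exact le_max_of_le_left (mul_le_mul_of_nonpos_left h.1 ht.le)
  set c1 := (b * exp (t * a) - a * exp (t * b)) / (b - a) with hc1
  set c2 := (exp (t * b) - exp (t * a)) / (b - a) with hc2
  have hchord : ∀ᵐ ω ∂P, exp (t * Y ω) ≤ c1 + c2 * Y ω := by
    refine hbd.mono fun ω h => ?_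
    set y := Y ω
    have hθ : (0:ℝ) ≤ (b - y) / (b - a) := div_nonneg (by linarith [h.2]) hba.le
    have hθ' : (0:ℝ) ≤ (y - a) / (b - a) := div_nonneg (by linarith [h.1]) hba.le
    have hsum : (b - y) / (b - a) + (y - a) / (b - a) = 1 := by field_simp; ring
    have := convexOn_exp.2 (Set.mem_univ (t * a)) (Set.mem_univ (t * b)) hθ hθ' hsum
    simp only [smul_eq_mul] at this
    have harg : (b - y) / (b - a) * (t * a) + (y - a) / (b - a) * (t * b) = t * y := by
      field_simp; ring
    rw [harg] at this
    refine this.trans (le_of_eq ?_)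
    rw [hc1, hc2]; field_simp; ring
  have hmgf : mgf Y P t ≤ c1 + c2 * μ := by
    have h1 : mgf Y P t ≤ ∫ ω, (c1 + c2 * Y ω) ∂P :=
      integral_mono_ae hexpint ((integrable_const c1).add (hYint.const_mul c2)) hchord
    rwa [integral_add (integrable_const c1) (hYint.const_mul c2), integral_const,
      integral_const_mul, probReal_univ, smul_eq_mul, one_mul] at h1
  refine hmgf.trans ?_
  set p := (μ - a) / (b - a) with hpdef
  set u := t * (b - a) with hudef
  have hp : 0 ≤ p := div_nonneg (by linarith) hba.le
  have hp1 : p ≤ 1 := by rw [hpdef, div_le_one hba]; linarith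
  have hD := keyD_pos hp hp1 u
  have htb : t * b = t * a + u := by rw [hudef]; ring
  have heq : c1 + c2 * μ = exp (t * a) * (1 - p + p * exp u) := by
    rw [hc1, hc2, hpdef, htb, Real.exp_add]
    field_simp
    ring
  have hpu : t * a + p * u = t * μ := by
    rw [hpdef, hudef]; field_simp; ring
  calc c1 + c2 * μ = exp (t * a + Real.log (1 - p + p * exp u)) := by
        rw [Real.exp_add, Real.exp_log hD, heq]
    _ ≤ exp (t * a + (p * u + u ^ 2 / 8)) := by
        have := keyA3 u hp hp1
        exact Real.exp_le_exp.2 (by linarith)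
    _ = exp (t * μ + t ^ 2 * (b - a) ^ 2 / 8) := by
        rw [← hpu]; congr 1; rw [hudef]; ring

open MeasureTheory ProbabilityTheory in
lemma hoeffding_tail {Ω : Type*} [MeasurableSpace Ω] (P : Measure Ω) [IsProbabilityMeasure P]
    {Y : Ω → ℝ} (hY : Measurable Y) {a b : ℝ} (hab : a < b)
    (hbd : ∀ᵐ ω ∂P, Y ω ∈ Set.Icc a b) {s : ℝ} (hs : 0 ≤ s) :
    P {ω | (∫ ω', Y ω' ∂P) + s ≤ Y ω} ≤ ENNReal.ofReal (exp (-(2 * s ^ 2 / (b - a) ^ 2))) := by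
  have hba : (0:ℝ) < b - a := by linarith
  set t := 4 * s / (b - a) ^ 2 with htdef
  have ht : 0 ≤ t := div_nonneg (by linarith) (by positivity)
  have hexpint : Integrable (fun ω => exp (t * Y ω)) P := by
    refine Integrable.mono' (integrable_const (exp (max (t * a) (t * b))))
      (hY.const_mul t).exp.aestronglyMeasurable ?_
    refine hbd.mono fun ω h => ?_
    rw [Real.norm_eq_abs, abs_of_pos (Real.exp_pos _), Real.exp_le_exp]
    exact le_max_of_le_right (mul_le_mul_of_nonneg_left h.2 ht)
  have hcher := measure_ge_le_exp_mul_mgf (μ := P) (X := Y) ((∫ ω', Y ω' ∂P) + s) ht hexpint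
  have hmgf := hoeffding_mgf P hY hab hbd t
  have hbound : exp (-t * ((∫ ω', Y ω' ∂P) + s)) * mgf Y P t
      ≤ exp (-(2 * s ^ 2 / (b - a) ^ 2)) := by
    have h1 : exp (-t * ((∫ ω', Y ω' ∂P) + s)) * mgf Y P t
        ≤ exp (-t * ((∫ ω', Y ω' ∂P) + s)) * exp (t * (∫ ω', Y ω' ∂P) + t ^ 2 * (b - a) ^ 2 / 8) :=
      mul_le_mul_of_nonneg_left hmgf (Real.exp_pos _).le
    refine h1.trans (le_of_eq ?_)
    rw [← Real.exp_add]
    congr 1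
    rw [htdef]
    field_simp
    ring
  have hfinal : (P {ω | (∫ ω', Y ω' ∂P) + s ≤ Y ω}).toReal
      ≤ exp (-(2 * s ^ 2 / (b - a) ^ 2)) := hcher.trans hbound
  calc P {ω | (∫ ω', Y ω' ∂P) + s ≤ Y ω}
      = ENNReal.ofReal (P {ω | (∫ ω', Y ω' ∂P) + s ≤ Y ω}).toReal :=
        (ENNReal.ofReal_toReal (measure_ne_top P _)).symm
    _ ≤ ENNReal.ofReal (exp (-(2 * s ^ 2 / (b - a) ^ 2))) := ENNReal.ofReal_le_ofReal hfinal

open Matrix in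
lemma lamMin_le {n : ℕ} {M : Matrix (Fin n) (Fin n) ℝ} (hM : M.IsHermitian) (i : Fin n) :
    lamMin M ≤ hM.eigenvalues i := by
  unfold lamMin
  rw [hM.spectrum_real_eq_range_eigenvalues]
  exact csInf_le (Set.finite_range _).bddBelow ⟨i, rfl⟩

open Matrix in
lemma lamMin_pos {n : ℕ} (hn : 0 < n) {M : Matrix (Fin n) (Fin n) ℝ} (hM : M.PosDef) :
    0 < lamMin M := by
  have hne : Nonempty (Fin n) := ⟨⟨0, hn⟩⟩
  unfold lamMin
  rw [hM.1.spectrum_real_eq_range_eigenvalues]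
  have hmem : sInf (Set.range hM.1.eigenvalues) ∈ Set.range hM.1.eigenvalues :=
    (Set.range_nonempty _).csInf_mem (Set.finite_range _)
  obtain ⟨i, hi⟩ := hmem
  rw [← hi]
  exact hM.eigenvalues_pos i

open Matrix in
lemma dot_mulVec_comm {n : ℕ} (A : Matrix (Fin n) (Fin n) ℝ) (v w : Fin n → ℝ) :
    (A *ᵥ v) ⬝ᵥ w = v ⬝ᵥ (Aᵀ *ᵥ w) := by
  rw [mulVec_transpose, dotProduct_comm (A *ᵥ v) w, dotProduct_mulVec, dotProduct_comm]

open Matrix in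
lemma quad_lower {n : ℕ} (hn : 0 < n) {M : Matrix (Fin n) (Fin n) ℝ} (hM : M.IsHermitian)
    (x : Fin n → ℝ) : lamMin M * (x ⬝ᵥ x) ≤ x ⬝ᵥ M *ᵥ x := by
  classical
  set U : Matrix (Fin n) (Fin n) ℝ := (hM.eigenvectorUnitary : Matrix (Fin n) (Fin n) ℝ) with hUdef
  have hUstar : star U = Uᵀ := by
    rw [Matrix.star_eq_conjTranspose, conjTranspose_eq_transpose_of_trivial]
  have hUU : U * star U = 1 := Unitary.mul_star_self_of_mem hM.eigenvectorUnitary.2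
  set y := star U *ᵥ x with hydef
  have hxU : ∀ z : Fin n → ℝ, x ⬝ᵥ (U *ᵥ z) = y ⬝ᵥ z := by
    intro z
    rw [hydef, hUstar]
    have h := dot_mulVec_comm Uᵀ x z
    rw [transpose_transpose] at h
    exact h.symm
  have hd : (RCLike.ofReal ∘ hM.eigenvalues : Fin n → ℝ) = hM.eigenvalues := by
    ext i; simp [RCLike.ofReal_real_eq_id]
  have h1 : x ⬝ᵥ M *ᵥ x = ∑ i, hM.eigenvalues i * (y i) ^ 2 := by
    conv_lhs => rw [hM.spectral_theorem]
    rw [Unitary.conjStarAlgAut_apply, ← hUdef, hd, ← mulVec_mulVec, ← mulVec_mulVec, hxU, ← hydef]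
    rw [dotProduct]
    refine Finset.sum_congr rfl fun i _ => ?_
    rw [mulVec_diagonal]
    ring
  have h2 : x ⬝ᵥ x = ∑ i, (y i) ^ 2 := by
    have : y ⬝ᵥ y = x ⬝ᵥ x := by
      have h3 : y ⬝ᵥ y = x ⬝ᵥ ((star U)ᵀ *ᵥ y) := dot_mulVec_comm (star U) x y
      rw [hUstar, transpose_transpose] at h3
      rw [h3, hydef, mulVec_mulVec, hUU, one_mulVec]
    rw [← this, dotProduct]
    exact Finset.sum_congr rfl fun i _ => (sq (y i)).symm
  rw [h1, h2, Finset.mul_sum]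
  refine Finset.sum_le_sum fun i _ => ?_
  exact mul_le_mul_of_nonneg_right (lamMin_le hM i) (sq_nonneg _)

open Matrix in
lemma inv_quad_nonneg {n : ℕ} {M : Matrix (Fin n) (Fin n) ℝ} (hM : M.PosDef) (x : Fin n → ℝ) :
    0 ≤ x ⬝ᵥ M⁻¹ *ᵥ x := by
  have := hM.inv.posSemidef.re_dotProduct_nonneg x
  simpa using this

open Matrix in
lemma inv_quad_upper {n : ℕ} (hn : 0 < n) {M : Matrix (Fin n) (Fin n) ℝ} (hM : M.PosDef)
    (x : Fin n → ℝ) : x ⬝ᵥ M⁻¹ *ᵥ x ≤ (x ⬝ᵥ x) / lamMin M := by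
  have hlam : 0 < lamMin M := lamMin_pos hn hM
  set q := x ⬝ᵥ M⁻¹ *ᵥ x with hq
  set y := M⁻¹ *ᵥ x with hy
  have hq0 : 0 ≤ q := inv_quad_nonneg hM x
  have hMy : M *ᵥ y = x := by
    rw [hy, mulVec_mulVec, Matrix.mul_nonsing_inv _ (isUnit_iff_ne_zero.mpr hM.det_pos.ne'),
      one_mulVec]
  have hrayleigh : lamMin M * (y ⬝ᵥ y) ≤ q := by
    have h := quad_lower hn hM.1 y
    rw [hMy, dotProduct_comm y x] at h
    exact h
  have hcs : q ^ 2 ≤ (x ⬝ᵥ x) * (y ⬝ᵥ y) := by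
    have h := Finset.sum_mul_sq_le_sq_mul_sq Finset.univ x y
    have e1 : x ⬝ᵥ x = ∑ i, x i ^ 2 := by simp [dotProduct, pow_two]
    have e2 : y ⬝ᵥ y = ∑ i, y i ^ 2 := by simp [dotProduct, pow_two]
    have e3 : q = ∑ i, x i * y i := rfl
    rw [e1, e2, e3]
    exact h
  have hxx : 0 ≤ x ⬝ᵥ x := by
    simp only [dotProduct]
    exact Finset.sum_nonneg fun i _ => mul_self_nonneg _
  rw [le_div_iff₀ hlam]
  nlinarith [hrayleigh, hcs, hq0, hxx, hlam, mul_le_mul_of_nonneg_left hrayleigh hxx,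
    mul_le_mul_of_nonneg_left hcs hlam.le, mul_nonneg hq0 hlam.le]

open Matrix MeasureTheory in
lemma integral_quad {Ω : Type*} [MeasurableSpace Ω] (P : Measure Ω) [IsProbabilityMeasure P]
    {n : ℕ} (A : Matrix (Fin n) (Fin n) ℝ) {X : Ω → Fin n → ℝ} (hX : Measurable X) {V : ℝ}
    (hbdd : ∀ᵐ ω ∂P, ∀ i, X ω i ∈ Set.Icc (-V) V) :
    ∫ ω, (X ω ⬝ᵥ A *ᵥ X ω) ∂P = ∑ i, ∑ j, A i j * ∫ ω, X ω i * X ω j ∂P := by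
  have hXi : ∀ i, Measurable fun ω => X ω i := fun i => (measurable_pi_apply i).comp hX
  have hint : ∀ i j : Fin n, Integrable (fun ω => X ω i * X ω j) P := by
    intro i j
    refine Integrable.mono' (integrable_const (V * V))
      ((hXi i).mul (hXi j)).aestronglyMeasurable ?_
    filter_upwards [hbdd] with ω hω
    rw [Real.norm_eq_abs, abs_mul]
    have h1 : |X ω i| ≤ V := abs_le.mpr ⟨(hω i).1, (hω i).2⟩
    have h2 : |X ω j| ≤ V := abs_le.mpr ⟨(hω j).1, (hω j).2⟩
    exact mul_le_mul h1 h2 (abs_nonneg _) ((abs_nonneg _).trans h1)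
  have hrw : ∀ ω, X ω ⬝ᵥ A *ᵥ X ω = ∑ i, ∑ j, A i j * (X ω i * X ω j) := by
    intro ω
    calc X ω ⬝ᵥ A *ᵥ X ω = ∑ i, X ω i * ∑ j, A i j * X ω j := rfl
      _ = ∑ i, ∑ j, A i j * (X ω i * X ω j) := by
          refine Finset.sum_congr rfl fun i _ => ?_
          rw [Finset.mul_sum]
          exact Finset.sum_congr rfl fun j _ => by ring
  simp_rw [hrw]
  rw [integral_finset_sum _ (fun i _ => integrable_finset_sum _
    (fun j _ => (hint i j).const_mul (A i j)))]
  refine Finset.sum_congr rfl fun i _ => ?_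
  rw [integral_finset_sum _ (fun j _ => (hint i j).const_mul _)]
  exact Finset.sum_congr rfl fun j _ => integral_const_mul _ _


end AuxLemmas

/-- **Lemma 3 of the paper.** Under the null hypothesis (mean `0`, covariance `Σ`, entries
a.s. bounded by `V`), the generalized likelihood ratio `2𝔏 = max_t Z_t` with
`Z_t = XᵀΣ⁻¹X − Xᵀ(Σ'_t)⁻¹X + ln(det Σ / det Σ'_t)` exceeds the threshold
`max_t (n − Tr(Σ(Σ'_t)⁻¹) + ln(det Σ / det Σ'_t)) + C₀V²n√(0.5 ln(2n/δ))`
with probability at most `δ/2`. -/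
theorem glrt_type_one_error
    {Ω : Type*} [MeasurableSpace Ω] (P : Measure Ω) [IsProbabilityMeasure P]
    {n : ℕ} (hn : 1 ≤ n) (δ V : ℝ) (hδ : δ ∈ Set.Ioo (0 : ℝ) 1) (hV : 0 < V)
    (S : Matrix (Fin n) (Fin n) ℝ) (hS : S.PosDef)
    (S' : Fin n → Matrix (Fin n) (Fin n) ℝ) (hS' : ∀ t, (S' t).PosDef)
    (C₀ : ℝ) (hC₀ : ∀ t, 1 / lamMin S + 1 / lamMin (S' t) ≤ C₀)
    (X : Ω → Fin n → ℝ) (hX : Measurable X)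
    (hmean : ∀ i, ∫ ω, X ω i ∂P = 0)
    (hcov : ∀ i j, ∫ ω, X ω i * X ω j ∂P = S i j)
    (hbdd : ∀ᵐ ω ∂P, ∀ i, X ω i ∈ Set.Icc (-V) V) :
    P {ω | (⨆ t : Fin n, (X ω ⬝ᵥ S⁻¹.mulVec (X ω) - X ω ⬝ᵥ (S' t)⁻¹.mulVec (X ω)
            + Real.log (S.det / (S' t).det)))
          ≥ (⨆ t : Fin n, ((n : ℝ) - (S * (S' t)⁻¹).trace + Real.log (S.det / (S' t).det)))
            + C₀ * V ^ 2 * n * Real.sqrt (0.5 * Real.log (2 * n / δ))}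
      ≤ ENNReal.ofReal (δ / 2) := by
  have hn0 : 0 < n := hn
  have hne : Nonempty (Fin n) := ⟨⟨0, hn⟩⟩
  have hnR : (0:ℝ) < n := by exact_mod_cast hn0
  have hXi : ∀ i, Measurable fun ω => X ω i := fun i => (measurable_pi_apply i).comp hX
  have hlamS : 0 < lamMin S := lamMin_pos hn0 hS
  have hlam' : ∀ t, 0 < lamMin (S' t) := fun t => lamMin_pos hn0 (hS' t)
  have hC₀pos : 0 < C₀ :=
    lt_of_lt_of_le (add_pos (one_div_pos.mpr hlamS) (one_div_pos.mpr (hlam' ⟨0, hn0⟩)))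
      (hC₀ ⟨0, hn0⟩)
  set R := C₀ * V ^ 2 * (n:ℝ) with hRdef
  have hR : 0 < R := by positivity
  set L := Real.log (2 * n / δ) with hLdef
  have h2n : (0:ℝ) < 2 * n / δ := div_pos (by positivity) hδ.1
  have hn1 : (1:ℝ) ≤ n := by exact_mod_cast hn
  have hL : 0 ≤ L := Real.log_nonneg (by
    rw [le_div_iff₀ hδ.1]
    nlinarith [hδ.2])
  set c := Real.sqrt (0.5 * L) with hcdef
  have hc : 0 ≤ c := Real.sqrt_nonneg _
  have hc2 : c ^ 2 = 0.5 * L := Real.sq_sqrt (by positivity)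
  set W : Fin n → Ω → ℝ := fun t ω =>
    X ω ⬝ᵥ S⁻¹.mulVec (X ω) - X ω ⬝ᵥ (S' t)⁻¹.mulVec (X ω) with hWdef
  -- measurability
  have hqmeas : ∀ (A : Matrix (Fin n) (Fin n) ℝ), Measurable (fun ω => X ω ⬝ᵥ A *ᵥ X ω) := by
    intro A
    show Measurable fun ω => ∑ i, X ω i * ∑ j, A i j * X ω j
    exact Finset.measurable_sum _ fun i _ =>
      (hXi i).mul (Finset.measurable_sum _ fun j _ => ((hXi j).const_mul _))
  have hWmeas : ∀ t, Measurable (W t) := fun t => (hqmeas S⁻¹).sub (hqmeas (S' t)⁻¹)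
  -- a.s. bounds
  have hgood : ∀ t, ∀ᵐ ω ∂P, W t ω ∈
      Set.Icc (-((n:ℝ) * V ^ 2 / lamMin (S' t))) (-((n:ℝ) * V ^ 2 / lamMin (S' t)) + R) := by
    intro t
    filter_upwards [hbdd] with ω hω
    have hxx : X ω ⬝ᵥ X ω ≤ (n:ℝ) * V ^ 2 := by
      have hterm : ∀ i, X ω i * X ω i ≤ V ^ 2 := fun i => by nlinarith [(hω i).1, (hω i).2]
      calc X ω ⬝ᵥ X ω = ∑ i, X ω i * X ω i := rfl
        _ ≤ ∑ _i : Fin n, V ^ 2 := Finset.sum_le_sum fun i _ => hterm i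
        _ = (n:ℝ) * V ^ 2 := by simp [Finset.sum_const, mul_comm]
    have h1 := inv_quad_upper hn0 hS (X ω)
    have h2 := inv_quad_upper hn0 (hS' t) (X ω)
    have h3 := inv_quad_nonneg hS (X ω)
    have h4 := inv_quad_nonneg (hS' t) (X ω)
    have h5 : X ω ⬝ᵥ S⁻¹ *ᵥ X ω ≤ (n:ℝ) * V ^ 2 / lamMin S :=
      h1.trans ((div_le_div_iff_of_pos_right hlamS).mpr hxx)
    have h6 : X ω ⬝ᵥ (S' t)⁻¹ *ᵥ X ω ≤ (n:ℝ) * V ^ 2 / lamMin (S' t) :=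
      h2.trans ((div_le_div_iff_of_pos_right (hlam' t)).mpr hxx)
    have h7 : (n:ℝ) * V ^ 2 / lamMin S + (n:ℝ) * V ^ 2 / lamMin (S' t) ≤ R := by
      have hnV : (0:ℝ) ≤ (n:ℝ) * V ^ 2 := by positivity
      calc (n:ℝ) * V ^ 2 / lamMin S + (n:ℝ) * V ^ 2 / lamMin (S' t)
          = (1 / lamMin S + 1 / lamMin (S' t)) * ((n:ℝ) * V ^ 2) := by ring
        _ ≤ C₀ * ((n:ℝ) * V ^ 2) := mul_le_mul_of_nonneg_right (hC₀ t) hnV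
        _ = R := by rw [hRdef]; ring
    constructor
    · simp only [hWdef]
      linarith
    · simp only [hWdef]
      linarith
  -- expectations
  have hEW : ∀ t, ∫ ω, W t ω ∂P = (n:ℝ) - (S * (S' t)⁻¹).trace := by
    intro t
    have hWt : (fun ω => W t ω) = fun ω => X ω ⬝ᵥ (S⁻¹ - (S' t)⁻¹) *ᵥ X ω := by
      funext ω
      simp only [hWdef]
      rw [sub_mulVec, dotProduct_sub]
    rw [hWt, integral_quad P _ hX hbdd]
    have hSsymm : ∀ i j, S i j = S j i := by
      intro i j
      have h := congrFun (congrFun hS.1 i) j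
      simpa [Matrix.conjTranspose_apply] using h.symm
    have hS'sym : ∀ i j, (S' t)⁻¹ i j = (S' t)⁻¹ j i := by
      intro i j
      have h := congrFun (congrFun (hS' t).inv.1 i) j
      simpa [Matrix.conjTranspose_apply] using h.symm
    have e1 : ∑ i, ∑ j, S⁻¹ i j * S i j = (n:ℝ) := by
      have h1 : S⁻¹ * S = 1 := Matrix.nonsing_inv_mul S (isUnit_iff_ne_zero.mpr hS.det_pos.ne')
      have h2 : (S⁻¹ * S).trace = ∑ i, ∑ j, S⁻¹ i j * S j i := by
        simp [Matrix.trace, Matrix.diag, Matrix.mul_apply]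
      have h3 : ∑ i, ∑ j, S⁻¹ i j * S i j = ∑ i, ∑ j, S⁻¹ i j * S j i :=
        Finset.sum_congr rfl fun i _ => Finset.sum_congr rfl fun j _ => by rw [hSsymm i j]
      rw [h3, ← h2, h1, Matrix.trace_one]
      simp
    have e2 : ∑ i, ∑ j, (S' t)⁻¹ i j * S i j = (S * (S' t)⁻¹).trace := by
      have h2 : (S * (S' t)⁻¹).trace = ∑ i, ∑ j, S i j * (S' t)⁻¹ j i := by
        simp [Matrix.trace, Matrix.diag, Matrix.mul_apply]
      rw [h2]
      exact Finset.sum_congr rfl fun i _ => Finset.sum_congr rfl fun j _ => by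
        rw [hS'sym i j]; ring
    have e3 : ∑ i, ∑ j, (S⁻¹ - (S' t)⁻¹) i j * (∫ ω, X ω i * X ω j ∂P)
        = ∑ i, ∑ j, S⁻¹ i j * S i j - ∑ i, ∑ j, (S' t)⁻¹ i j * S i j := by
      rw [← Finset.sum_sub_distrib]
      refine Finset.sum_congr rfl fun i _ => ?_
      rw [← Finset.sum_sub_distrib]
      refine Finset.sum_congr rfl fun j _ => ?_
      rw [hcov i j, Matrix.sub_apply]
      ring
    rw [e3, e1, e2]
  refine le_trans (measure_mono (?_ :
      _ ⊆ ⋃ t : Fin n, {ω | (∫ ω', W t ω' ∂P) + R * c ≤ W t ω})) ?_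
  · intro ω hω
    simp only [Set.mem_setOf_eq, ge_iff_le] at hω
    obtain ⟨t₀, ht₀⟩ := exists_eq_ciSup_of_finite
      (f := fun t : Fin n => X ω ⬝ᵥ S⁻¹.mulVec (X ω) - X ω ⬝ᵥ (S' t)⁻¹.mulVec (X ω)
        + Real.log (S.det / (S' t).det))
    have hm : ((n : ℝ) - (S * (S' t₀)⁻¹).trace + Real.log (S.det / (S' t₀).det))
        ≤ ⨆ t : Fin n, ((n : ℝ) - (S * (S' t)⁻¹).trace + Real.log (S.det / (S' t).det)) :=
      le_ciSup (f := fun t : Fin n => (n:ℝ) - (S * (S' t)⁻¹).trace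
        + Real.log (S.det / (S' t).det)) (Set.Finite.bddAbove (Set.finite_range _)) t₀
    rw [← ht₀] at hω
    refine Set.mem_iUnion.2 ⟨t₀, ?_⟩
    simp only [Set.mem_setOf_eq]
    rw [hEW t₀]
    simp only [hWdef]
    linarith
  refine (measure_iUnion_le _).trans ?_
  rw [tsum_fintype]
  have htail : ∀ t : Fin n, P {ω | (∫ ω', W t ω' ∂P) + R * c ≤ W t ω}
      ≤ ENNReal.ofReal (δ / (2 * n)) := by
    intro t
    have hab : -((n:ℝ) * V ^ 2 / lamMin (S' t)) < -((n:ℝ) * V ^ 2 / lamMin (S' t)) + R := by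
      linarith
    have h := hoeffding_tail P (hWmeas t) hab (hgood t) (s := R * c) (by positivity)
    refine h.trans ?_
    refine ENNReal.ofReal_le_ofReal (le_of_eq ?_)
    have hbb : -((n:ℝ) * V ^ 2 / lamMin (S' t)) + R - (-((n:ℝ) * V ^ 2 / lamMin (S' t))) = R := by
      ring
    rw [hbb]
    have harg : 2 * (R * c) ^ 2 / R ^ 2 = L := by
      field_simp
      nlinarith [hc2]
    rw [harg, hLdef, Real.exp_neg, Real.exp_log h2n, inv_div]
  have hnne : (n:ℝ) ≠ 0 := hnR.ne'
  refine le_trans (Finset.sum_le_sum fun t _ => htail t) ?_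
  rw [Finset.sum_const, Finset.card_univ, Fintype.card_fin, nsmul_eq_mul,
    ← ENNReal.ofReal_natCast n, ← ENNReal.ofReal_mul (by positivity)]
  refine le_of_eq ?_
  congr 1
  field_simp
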